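/- Let A, B ⊆ ℝ² be measurable, t ∈ (0,1), and z ∈ ℝ². Let H be the homothety of ratio −(1−t)/t centered at z. Suppose R_A ⊆ co(A) and R_B ⊆ co(B) are measurable sets with |R_A ∩ H(R_B)| > |co(A)\A| + |co(H(B))\H(B)|. Then z ∈ tA + (1−t)B. -/

import Mathlib

open Pointwise Real MeasureTheory

/-- Averaging argument: if R_A ⊆ co(A), R_B ⊆ co(B) and
|R_A ∩ H(R_B)| > |co(A)\A| + |co(H(B))\H(B)| where H is the homothety of ratio −(1−t)/t
centered at z, then z ∈ tA + (1−t)B. -/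
theorem stmt_5 (A B RA RB : Set (EuclideanSpace ℝ (Fin 2)))
    (hA : MeasurableSet A) (hB : MeasurableSet B)
    (hRA : MeasurableSet RA) (hRB : MeasurableSet RB)
    (t : ℝ) (ht : t ∈ Set.Ioo (0 : ℝ) 1) (z : EuclideanSpace ℝ (Fin 2))
    (H : EuclideanSpace ℝ (Fin 2) → EuclideanSpace ℝ (Fin 2))
    (hH : ∀ x, H x = z - ((1 - t) / t) • (x - z))
    (hRAco : RA ⊆ convexHull ℝ A) (hRBco : RB ⊆ convexHull ℝ B)
    (hbig : volume (convexHull ℝ A \ A) + volume (convexHull ℝ (H '' B) \ (H '' B))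
      < volume (RA ∩ H '' RB)) :
    z ∈ t • A + (1 - t) • B := by
  obtain ⟨ht0, ht1⟩ := ht
  have hHeq : H = ⇑(AffineMap.homothety z (-((1 - t) / t))) := by
    funext x
    rw [hH, AffineMap.homothety_apply]
    simp [neg_smul, sub_eq_add_neg]
    module
  have hex : ∃ x, x ∈ A ∧ x ∈ H '' B := by
    by_contra h
    push_neg at h
    have hsub : RA ∩ H '' RB ⊆
        (convexHull ℝ A \ A) ∪ (convexHull ℝ (H '' B) \ (H '' B)) := by
      rintro x ⟨hx1, hx2⟩
      have hxA : x ∈ convexHull ℝ A := hRAco hx1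
      have hxHB : x ∈ convexHull ℝ (H '' B) := by
        rw [hHeq] at hx2 ⊢
        rw [← AffineMap.image_convexHull]
        exact Set.image_mono hRBco hx2
      by_cases hA' : x ∈ A
      · exact Or.inr ⟨hxHB, fun hxB => h x hA' hxB⟩
      · exact Or.inl ⟨hxA, hA'⟩
    exact absurd hbig (not_lt.mpr ((measure_mono hsub).trans (measure_union_le _ _)))
  obtain ⟨x, hxA, b, hbB, hbx⟩ := hex
  subst hbx
  have h1 : t * ((1 - t) / t) = 1 - t := by field_simp
  have key : t • (((1 - t) / t) • (b - z)) = (1 - t) • (b - z) := by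
    rw [smul_smul, h1]
  have hz : t • H b + (1 - t) • b = z := by
    rw [hH, smul_sub, key]; module
  exact hz ▸ Set.add_mem_add (Set.smul_mem_smul_set hxA) (Set.smul_mem_smul_set hbB)
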